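/- (Local complementation by local unitaries.) Let G be a finite simple graph on Fin n and i a vertex. Let τ_i(G) be the graph whose edge set is the symmetric difference of E(G) with the set of all unordered pairs of distinct neighbors of i (local complementation at i). Let U = ((I − i·X_i)/√2) · ∏_{j ∈ N(i)} ((I + i·Z_j)/√2), where the factors act on single qubits as indicated. Then U |G⟩⟨G| U† = |τ_i(G)⟩⟨τ_i(G)|, i.e. U|G⟩ equals the graph state |τ_i(G)⟩ up to a global phase. -/

import Mathlib

open Matrix
open scoped BigOperators

noncomputable section

/-- `(-1)^c` as a complex number, for `c : ZMod 2`. -/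
def sgn (c : ZMod 2) : ℂ := if c = 0 then 1 else -1

/-- Pauli `X = !![0,1;1,0]`, indexed by `ZMod 2`. -/
def PX : Matrix (ZMod 2) (ZMod 2) ℂ := fun a b => if a = b then 0 else 1

/-- Pauli `Y = !![0,−i;i,0]`, indexed by `ZMod 2`. -/
def PY : Matrix (ZMod 2) (ZMod 2) ℂ :=
  fun a b => if a = b then 0 else if a = 0 then -Complex.I else Complex.I

/-- Pauli `Z = !![1,0;0,−1]`, indexed by `ZMod 2`. -/
def PZ : Matrix (ZMod 2) (ZMod 2) ℂ := fun a b => if a = b then sgn a else 0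

/-- The tensor (Kronecker) product over all qubits of a family of single-qubit
operators: the `(x, y)` entry is `∏ i, (f i) (x i) (y i)`. -/
def tensorOp {V : Type*} [Fintype V] (f : V → Matrix (ZMod 2) (ZMod 2) ℂ) :
    Matrix (V → ZMod 2) (V → ZMod 2) ℂ :=
  fun x y => ∏ i, f i (x i) (y i)

/-- The operator acting as `A` on qubit `i` and as the identity on all other qubits. -/
def localOp {V : Type*} [Fintype V] [DecidableEq V] (i : V)
    (A : Matrix (ZMod 2) (ZMod 2) ℂ) : Matrix (V → ZMod 2) (V → ZMod 2) ℂ :=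
  tensorOp (fun j => if j = i then A else 1)

/-- `Σ_{{i,j} ∈ E(G)} x_i x_j`, as an element of `ZMod 2`. -/
def edgePhase {V : Type*} [Fintype V] [DecidableEq V] (G : SimpleGraph V)
    [DecidableRel G.Adj] (x : V → ZMod 2) : ZMod 2 :=
  ∑ e ∈ G.edgeFinset, Sym2.lift ⟨fun i j => x i * x j, fun _ _ => mul_comm _ _⟩ e

/-- The graph state `|G⟩`, with amplitudes `⟨x|G⟩ = 2^{-n/2}·(−1)^{Σ_{{i,j}∈E(G)} x_i x_j}`. -/
def graphState {V : Type*} [Fintype V] [DecidableEq V] (G : SimpleGraph V)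
    [DecidableRel G.Adj] : (V → ZMod 2) → ℂ :=
  fun x => (Real.sqrt 2 : ℂ)⁻¹ ^ (Fintype.card V) * sgn (edgePhase G x)

/-- The entangling unitary `U_G = ∏_{{i,j} ∈ E(G)} CZ_{i,j}`: the diagonal matrix with
`(x,x)` entry `(−1)^{Σ_{{i,j}∈E(G)} x_i x_j}`. -/
def entangler {V : Type*} [Fintype V] [DecidableEq V] (G : SimpleGraph V)
    [DecidableRel G.Adj] : Matrix (V → ZMod 2) (V → ZMod 2) ℂ :=
  Matrix.diagonal (fun x => sgn (edgePhase G x))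

/-- The correlation operator `K_i = X_i ∏_{j ∈ N(i)} Z_j`. -/
def corrOp {V : Type*} [Fintype V] [DecidableEq V] (G : SimpleGraph V)
    [DecidableRel G.Adj] (i : V) : Matrix (V → ZMod 2) (V → ZMod 2) ℂ :=
  tensorOp (fun j => if j = i then PX else if G.Adj i j then PZ else 1)

/-- `Z^r = ∏_i Z_i^{r_i}` for `r ∈ (ZMod 2)^V`. -/
def Zop {V : Type*} [Fintype V] (r : V → ZMod 2) :
    Matrix (V → ZMod 2) (V → ZMod 2) ℂ :=
  tensorOp (fun i => PZ ^ (r i).val)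

/-- The rank-one outer product `|ψ⟩⟨ψ|`. -/
def outer {α : Type*} (ψ : α → ℂ) : Matrix α α ℂ := fun x y => ψ x * star (ψ y)


/-- Local complementation `τ_i(G)`: the edge set is the symmetric difference of `E(G)`
with the set of all unordered pairs of distinct neighbors of `i`. -/
def localComp {V : Type*} (G : SimpleGraph V) (i : V) : SimpleGraph V where
  Adj a b := Xor' (G.Adj a b) (a ≠ b ∧ G.Adj i a ∧ G.Adj i b)
  symm := by
    constructor
    intro a b h
    have hg : G.Adj a b ↔ G.Adj b a := G.adj_comm a b
    have hn : a ≠ b ↔ b ≠ a := ne_comm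
    unfold Xor' at h ⊢
    unfold Xor at h ⊢
    tauto
  loopless := by
    constructor
    intro a
    simp [Xor']

instance {V : Type*} [DecidableEq V] (G : SimpleGraph V) [DecidableRel G.Adj] (i : V) :
    DecidableRel (localComp G i).Adj := fun a b =>
  show Decidable (Xor' (G.Adj a b) (a ≠ b ∧ G.Adj i a ∧ G.Adj i b)) by
    unfold Xor'; infer_instance

/-- The local unitary `U = ((I − i·X_i)/√2) · ∏_{j ∈ N(i)} ((I + i·Z_j)/√2)`
implementing local complementation at `i`. -/
def localCompU {V : Type*} [Fintype V] [DecidableEq V] (G : SimpleGraph V)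
    [DecidableRel G.Adj] (i : V) : Matrix (V → ZMod 2) (V → ZMod 2) ℂ :=
  tensorOp (fun j =>
    if j = i then (Real.sqrt 2 : ℂ)⁻¹ • (1 - Complex.I • PX)
    else if G.Adj i j then (Real.sqrt 2 : ℂ)⁻¹ • (1 + Complex.I • PZ)
    else 1)

-- lemma 1: tensor multiplication
lemma tensorOp_mul {V : Type*} [Fintype V] [DecidableEq V]
    (f g : V → Matrix (ZMod 2) (ZMod 2) ℂ) :
    tensorOp f * tensorOp g = tensorOp (fun j => f j * g j) := by
  ext x z
  simp only [tensorOp, Matrix.mul_apply]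
  rw [← Fintype.piFinset_univ (α := V) (β := fun _ => ZMod 2)]
  rw [show (∏ j : V, ∑ t : ZMod 2, f j (x j) t * g j t (z j))
      = ∑ y ∈ Fintype.piFinset (fun _ : V => (Finset.univ : Finset (ZMod 2))),
        ∏ j : V, f j (x j) (y j) * g j (y j) (z j) from
    Finset.prod_univ_sum _ _]
  exact Finset.sum_congr rfl fun y _ => (Finset.prod_mul_distrib).symm

-- lemma 2: outer conjugation
lemma mul_outer_conjTranspose {α : Type*} [Fintype α] (M : Matrix α α ℂ) (ψ : α → ℂ) :
    M * outer ψ * Mᴴ = outer (M.mulVec ψ) := by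
  ext x z
  simp only [Matrix.mul_apply, outer, Matrix.conjTranspose_apply, Matrix.mulVec, dotProduct,
    Finset.sum_mul, Finset.mul_sum, star_sum, star_mul']
  refine Finset.sum_congr rfl fun b _ => Finset.sum_congr rfl fun a _ => by ring

-- lemma 3: outer of unit scalar multiple
lemma outer_smul_unit {α : Type*} (φ : ℂ) (hφ : star φ * φ = 1) (ψ : α → ℂ) :
    outer (φ • ψ) = outer ψ := by
  ext x z
  simp only [outer, Pi.smul_apply, smul_eq_mul, star_mul']
  calc φ * ψ x * (star φ * star (ψ z)) = (star φ * φ) * (ψ x * star (ψ z)) := by ring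
  _ = ψ x * star (ψ z) := by rw [hφ]; ring

-- sgn lemmas
lemma zmod2_cases (a : ZMod 2) : a = 0 ∨ a = 1 := by revert a; decide
lemma sgn_add (a b : ZMod 2) : sgn (a + b) = sgn a * sgn b := by
  rcases zmod2_cases a with rfl|rfl <;> rcases zmod2_cases b with rfl|rfl <;>
    simp [sgn, show (1 + 1 : ZMod 2) = 0 from by decide]
lemma natCast_add_four (m : ℕ) : ((m + 4 : ℕ) : ZMod 2) = (m : ZMod 2) := by
  have h4 : ((4:ℕ) : ZMod 2) = 0 := by decide
  rw [Nat.cast_add, h4, add_zero]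

-- localOp mulVec
lemma localOp_mulVec {V : Type*} [Fintype V] [DecidableEq V] (i : V)
    (A : Matrix (ZMod 2) (ZMod 2) ℂ) (χ : (V → ZMod 2) → ℂ) (x : V → ZMod 2) :
    (localOp i A).mulVec χ x = ∑ t : ZMod 2, A (x i) t * χ (Function.update x i t) := by
  have hentry : ∀ y, localOp i A x y
      = A (x i) (y i) * ∏ j ∈ ({i}ᶜ : Finset V), (if x j = y j then (1:ℂ) else 0) := by
    intro y
    rw [localOp, tensorOp, Fintype.prod_eq_mul_prod_compl i]
    simp only [if_pos rfl]
    congr 1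
    refine Finset.prod_congr rfl fun j hj => ?_
    rw [Finset.mem_compl, Finset.mem_singleton] at hj
    rw [if_neg hj, Matrix.one_apply]
  rw [Matrix.mulVec, dotProduct]
  rw [← Finset.sum_filter_of_ne (p := fun y => ∀ j, j ≠ i → y j = x j)
    (f := fun y => localOp i A x y * χ y)]
  · refine Finset.sum_nbij' (fun y => y i) (fun t => Function.update x i t) ?_ ?_ ?_ ?_ ?_
    · intro a _; exact Finset.mem_univ _
    · intro t _
      simp only [Finset.mem_filter, Finset.mem_univ, true_and]
      intro j hj; exact Function.update_of_ne hj _ _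
    · intro y hy
      simp only [Finset.mem_filter, Finset.mem_univ, true_and] at hy
      funext j
      show Function.update x i (y i) j = y j
      by_cases h : j = i
      · subst h; simp
      · rw [Function.update_of_ne h]; exact (hy j h).symm
    · intro t _; simp
    · intro y hy
      simp only [Finset.mem_filter, Finset.mem_univ, true_and] at hy
      have hupd : Function.update x i (y i) = y := by
        funext j
        by_cases h : j = i
        · subst h; simp
        · rw [Function.update_of_ne h]; exact (hy j h).symm
      rw [hentry, hupd]
      have : ∏ j ∈ ({i}ᶜ : Finset V), (if x j = y j then (1:ℂ) else 0) = 1 := by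
        refine Finset.prod_eq_one fun j hj => ?_
        rw [Finset.mem_compl, Finset.mem_singleton] at hj
        rw [if_pos (hy j hj).symm]
      rw [this, mul_one]
  · intro y _ hne
    by_contra hy
    push_neg at hy
    obtain ⟨j, hj, hne2⟩ := hy
    apply hne
    rw [hentry]
    have : ∏ j ∈ ({i}ᶜ : Finset V), (if x j = y j then (1:ℂ) else 0) = 0 :=
      Finset.prod_eq_zero (i := j) (by simp [hj]) (by rw [if_neg (fun h => hne2 h.symm)])
    rw [this, mul_zero, zero_mul]


-- Single qubit matrices
def Amat : Matrix (ZMod 2) (ZMod 2) ℂ := (Real.sqrt 2 : ℂ)⁻¹ • (1 - Complex.I • PX)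
def Bmat : Matrix (ZMod 2) (ZMod 2) ℂ := (Real.sqrt 2 : ℂ)⁻¹ • (1 + Complex.I • PZ)
def Bfun (t : ZMod 2) : ℂ := (Real.sqrt 2 : ℂ)⁻¹ * (1 + Complex.I * sgn t)

lemma Bmat_apply (a b : ZMod 2) : Bmat a b = if a = b then Bfun a else 0 := by
  by_cases h : a = b <;>
    simp [Bmat, Bfun, PZ, Matrix.smul_apply, Matrix.add_apply, Matrix.one_apply, h]

lemma Amat_apply (a b : ZMod 2) :
    Amat a b = if a = b then (Real.sqrt 2 : ℂ)⁻¹ else -(Complex.I * (Real.sqrt 2 : ℂ)⁻¹) := by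
  by_cases h : a = b <;>
    simp [Amat, PX, Matrix.smul_apply, Matrix.sub_apply, Matrix.one_apply, h, mul_comm]

-- diagonal tensor
lemma tensorOp_diagonal {V : Type*} [Fintype V] [DecidableEq V]
    (f : V → Matrix (ZMod 2) (ZMod 2) ℂ) (δ : V → ZMod 2 → ℂ)
    (h : ∀ j a b, f j a b = if a = b then δ j a else 0) :
    tensorOp f = Matrix.diagonal (fun x => ∏ j, δ j (x j)) := by
  ext x y
  rw [tensorOp, Matrix.diagonal_apply]
  by_cases hxy : x = y
  · subst hxy
    rw [if_pos rfl]
    exact Finset.prod_congr rfl fun j _ => by rw [h, if_pos rfl]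
  · rw [if_neg hxy]
    obtain ⟨j, hj⟩ : ∃ j, x j ≠ y j := by
      by_contra hc; push_neg at hc; exact hxy (funext hc)
    exact Finset.prod_eq_zero (i := j) (Finset.mem_univ j) (by rw [h, if_neg hj])

lemma diagonal_mulVec {α : Type*} [Fintype α] [DecidableEq α] (d : α → ℂ) (v : α → ℂ)
    (x : α) : (Matrix.diagonal d).mulVec v x = d x * v x := by
  simp [Matrix.mulVec, dotProduct, Matrix.diagonal_apply, ite_mul,
    Finset.sum_ite_eq]

section Graph

variable {V : Type*} [Fintype V] [DecidableEq V] (G : SimpleGraph V) [DecidableRel G.Adj]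
  (i : V)

/-- decomposition of the local unitary -/
lemma localCompU_eq :
    localCompU G i = localOp i Amat *
      Matrix.diagonal (fun x => ∏ j, if G.Adj i j then Bfun (x j) else 1) := by
  have hD : tensorOp (fun j => if j = i then 1 else if G.Adj i j then Bmat else 1)
      = Matrix.diagonal (fun x : V → ZMod 2 => ∏ j, if G.Adj i j then Bfun (x j) else 1) := by
    refine tensorOp_diagonal _ (fun j t => if G.Adj i j then Bfun t else 1) fun j a b => ?_
    by_cases hj : j = i
    · subst hj
      simp [G.irrefl, Matrix.one_apply]
    · by_cases ha : G.Adj i j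
      · simp [hj, ha, Bmat_apply]
      · simp [hj, ha, Matrix.one_apply]
  rw [localCompU, localOp, ← hD, tensorOp_mul]
  refine congrArg tensorOp (funext fun j => ?_)
  by_cases hj : j = i
  · simp [hj, Amat]
  · by_cases ha : G.Adj i j <;> simp [hj, ha, Bmat]

def q (x : V → ZMod 2) : Sym2 V → ZMod 2 :=
  Sym2.lift ⟨fun a b => x a * x b, fun _ _ => mul_comm _ _⟩

def Sfun (x : V → ZMod 2) : ZMod 2 := ∑ j ∈ G.neighborFinset i, x j
def Rfun (x : V → ZMod 2) : ZMod 2 := ∑ e ∈ G.edgeFinset.filter (fun e => i ∉ e), q x e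
def Kset : Finset (Sym2 V) := Finset.univ.filter (fun e => ¬ e.IsDiag ∧ ∀ j ∈ e, G.Adj i j)
def pairPhase (x : V → ZMod 2) : ZMod 2 := ∑ e ∈ Kset G i, q x e

lemma incidence_sum (x : V → ZMod 2) :
    ∑ e ∈ G.edgeFinset.filter (fun e => i ∈ e), q x e = x i * Sfun G i x := by
  have himg : G.edgeFinset.filter (fun e => i ∈ e)
      = (G.neighborFinset i).image (fun j => s(i, j)) := by
    ext e
    simp only [Finset.mem_filter, Finset.mem_image, SimpleGraph.mem_edgeFinset,
      SimpleGraph.mem_neighborFinset]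
    constructor
    · rintro ⟨he, hi⟩
      induction e using Sym2.ind with
      | _ a b =>
        rw [SimpleGraph.mem_edgeSet] at he
        rcases Sym2.mem_iff.mp hi with rfl | rfl
        · exact ⟨b, he, rfl⟩
        · exact ⟨a, he.symm, Sym2.eq_swap⟩
    · rintro ⟨j, hj, rfl⟩
      exact ⟨(SimpleGraph.mem_edgeSet G).mpr hj, Sym2.mem_mk_left i j⟩
  rw [himg, Finset.sum_image (fun a _ b _ h => Sym2.congr_right.mp h)]
  simp only [q, Sym2.lift_mk, Sfun, Finset.mul_sum]

lemma edgePhase_split (x : V → ZMod 2) :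
    edgePhase G x = x i * Sfun G i x + Rfun G i x := by
  rw [edgePhase, ← Finset.sum_filter_add_sum_filter_not G.edgeFinset (fun e => i ∈ e)]
  rw [← incidence_sum G i x]
  rfl

lemma Sfun_update (x : V → ZMod 2) (t : ZMod 2) :
    Sfun G i (Function.update x i t) = Sfun G i x := by
  refine Finset.sum_congr rfl fun j hj => ?_
  rw [SimpleGraph.mem_neighborFinset] at hj
  exact Function.update_of_ne (G.ne_of_adj hj).symm _ _

lemma Rfun_update (x : V → ZMod 2) (t : ZMod 2) :
    Rfun G i (Function.update x i t) = Rfun G i x := by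
  refine Finset.sum_congr rfl fun e he => ?_
  rw [Finset.mem_filter] at he
  obtain ⟨-, hni⟩ := he
  induction e using Sym2.ind with
  | _ a b =>
    simp only [Sym2.mem_iff, not_or] at hni
    simp only [q, Sym2.lift_mk]
    rw [Function.update_of_ne (fun h => hni.1 h.symm), Function.update_of_ne
      (fun h => hni.2 h.symm)]

lemma edgePhase_update (x : V → ZMod 2) (t : ZMod 2) :
    edgePhase G (Function.update x i t) = t * Sfun G i x + Rfun G i x := by
  rw [edgePhase_split G i, Sfun_update, Rfun_update, Function.update_self]

lemma mem_Kset (e : Sym2 V) :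
    e ∈ Kset G i ↔ ¬ e.IsDiag ∧ ∀ j ∈ e, G.Adj i j := by
  simp [Kset]

lemma edgePhase_localComp (x : V → ZMod 2) :
    edgePhase (localComp G i) x = edgePhase G x + pairPhase G i x := by
  have hmem : ∀ e : Sym2 V, e ∈ (localComp G i).edgeFinset
      ↔ Xor' (e ∈ G.edgeFinset) (e ∈ Kset G i) := by
    intro e
    induction e using Sym2.ind with
    | _ a b =>
      rw [SimpleGraph.mem_edgeFinset, SimpleGraph.mem_edgeSet, SimpleGraph.mem_edgeFinset,
        SimpleGraph.mem_edgeSet, mem_Kset]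
      show Xor' (G.Adj a b) (a ≠ b ∧ G.Adj i a ∧ G.Adj i b) ↔ _
      simp [Sym2.mem_iff, forall_eq_or_imp, and_assoc]
  have h1 : ∀ (s : Finset (Sym2 V)) (x : V → ZMod 2),
      ∑ e ∈ s, q x e = ∑ e ∈ (Finset.univ : Finset (Sym2 V)), if e ∈ s then q x e else 0 := by
    intro s x
    rw [Finset.sum_ite_mem, Finset.univ_inter]
  have hq : ∀ (H : SimpleGraph V) [DecidableRel H.Adj] (y : V → ZMod 2),
      edgePhase H y = ∑ e ∈ H.edgeFinset, q y e := fun _ _ _ => rfl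
  rw [hq, hq, pairPhase, h1, h1 G.edgeFinset, h1 (Kset G i), ← Finset.sum_add_distrib]
  refine Finset.sum_congr rfl fun e _ => ?_
  by_cases hE : e ∈ G.edgeFinset <;> by_cases hK : e ∈ Kset G i <;>
    simp [hmem e, Xor', hE, hK, CharTwo.add_self_eq_zero]

/-- `c2 m = C(m,2) mod 2`. -/
def c2 : ℕ → ZMod 2
  | 0 => 0
  | (m+1) => c2 m + (m : ZMod 2)

lemma c2_add_four (m : ℕ) : c2 (m + 4) = c2 m := by
  show c2 (m+3) + _ = _
  show c2 (m+2) + _ + _ = _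
  show c2 (m+1) + _ + _ + _ = _
  show c2 m + _ + _ + _ + _ = _
  push_cast
  ring_nf
  have h2 : (2 : ZMod 2) = 0 := by decide
  have h6 : (6 : ZMod 2) = 0 := by decide
  rw [show (4 : ZMod 2) = 0 from by decide, h6]
  ring

lemma pairSum_card (s : Finset V) :
    ∑ e ∈ Finset.univ.filter (fun e : Sym2 V => ¬ e.IsDiag ∧ ∀ j ∈ e, j ∈ s), (1 : ZMod 2)
      = c2 s.card := by
  induction s using Finset.induction_on with
  | empty =>
    have : Finset.univ.filter (fun e : Sym2 V => ¬ e.IsDiag ∧ ∀ j ∈ e, j ∈ (∅ : Finset V))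
        = ∅ := by
      refine Finset.filter_false_of_mem fun e _ => ?_
      induction e using Sym2.ind with
      | _ a b =>
        rintro ⟨-, h⟩
        exact absurd (h a (Sym2.mem_mk_left a b)) (Finset.notMem_empty a)
    rw [this]
    simp [c2]
  | @insert a s ha ih =>
    have hsplit : Finset.univ.filter (fun e : Sym2 V => ¬ e.IsDiag ∧ ∀ j ∈ e, j ∈ insert a s)
        = (Finset.univ.filter (fun e : Sym2 V => ¬ e.IsDiag ∧ ∀ j ∈ e, j ∈ s))
          ∪ s.image (fun b => s(a, b)) := by
      ext e
      induction e using Sym2.ind with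
      | _ b c =>
        simp only [Finset.mem_filter, Finset.mem_univ, true_and, Finset.mem_union,
          Finset.mem_image, Sym2.mem_iff, Sym2.mk_isDiag_iff, Finset.mem_insert]
        constructor
        · rintro ⟨hbc, h⟩
          have hb := h b (Or.inl rfl)
          have hc := h c (Or.inr rfl)
          rcases hb with rfl | hb
          · rcases hc with rfl | hc
            · exact absurd rfl hbc
            · exact Or.inr ⟨c, hc, rfl⟩
          · rcases hc with rfl | hc
            · exact Or.inr ⟨b, hb, Sym2.eq_swap⟩
            · refine Or.inl ⟨hbc, ?_⟩
              rintro j (rfl | rfl)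
              · exact hb
              · exact hc
        · rintro (⟨hbc, h⟩ | ⟨d, hd, he⟩)
          · exact ⟨hbc, fun j hj => Or.inr (h j hj)⟩
          · have h1 : a ∈ s(b, c) := he ▸ Sym2.mem_mk_left a d
            have h2 : d ∈ s(b, c) := he ▸ Sym2.mem_mk_right a d
            have had : a ≠ d := fun h => ha (h ▸ hd)
            constructor
            · intro hbceq
              subst hbceq
              rcases Sym2.mem_iff.mp h1 with rfl | rfl <;>
                rcases Sym2.mem_iff.mp h2 with h' | h' <;> exact had h'.symm
            · intro j hj
              have : j ∈ s(a, d) := he ▸ (Sym2.mem_iff.mpr hj)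
              rcases Sym2.mem_iff.mp this with rfl | rfl
              · exact Or.inl rfl
              · exact Or.inr hd
    have hdisj : Disjoint
        (Finset.univ.filter (fun e : Sym2 V => ¬ e.IsDiag ∧ ∀ j ∈ e, j ∈ s))
        (s.image (fun b => s(a, b))) := by
      rw [Finset.disjoint_right]
      rintro e he hf
      simp only [Finset.mem_image] at he
      obtain ⟨d, hd, rfl⟩ := he
      rw [Finset.mem_filter] at hf
      exact ha (hf.2.2 a (Sym2.mem_mk_left a d))
    rw [hsplit, Finset.sum_union hdisj,
      Finset.sum_image (fun b _ c _ h => Sym2.congr_right.mp h), ih]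
    rw [Finset.card_insert_of_notMem ha]
    show c2 s.card + _ = c2 s.card + _
    rw [Finset.sum_const, nsmul_eq_mul, mul_one]

lemma pairPhase_eq (x : V → ZMod 2) :
    pairPhase G i x
      = c2 (((G.neighborFinset i).filter (fun j => x j = 1)).card) := by
  rw [← pairSum_card, pairPhase, Kset]
  have h1 : ∀ (p : Sym2 V → Prop) [DecidablePred p] (f : Sym2 V → ZMod 2),
      ∑ e ∈ Finset.univ.filter p, f e
        = ∑ e ∈ (Finset.univ : Finset (Sym2 V)), if p e then f e else 0 := by
    intro p _ f
    rw [Finset.sum_filter]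
  rw [h1, h1]
  refine Finset.sum_congr rfl fun e _ => ?_
  induction e using Sym2.ind with
  | _ a b =>
    simp only [Sym2.mk_isDiag_iff, Sym2.mem_iff, forall_eq_or_imp, forall_eq, q, Sym2.lift_mk,
      Finset.mem_filter, SimpleGraph.mem_neighborFinset]
    rcases zmod2_cases (x a) with hxa | hxa <;> rcases zmod2_cases (x b) with hxb | hxb <;>
      by_cases h1 : G.Adj i a <;> by_cases h2 : G.Adj i b <;> by_cases h3 : a = b <;>
        simp [hxa, hxb, h1, h2, h3]

lemma Sfun_eq (x : V → ZMod 2) :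
    Sfun G i x = (((G.neighborFinset i).filter (fun j => x j = 1)).card : ZMod 2) := by
  rw [Sfun, ← Finset.sum_filter_add_sum_filter_not (G.neighborFinset i) (fun j => x j = 1)]
  have h2 : ∑ j ∈ (G.neighborFinset i).filter (fun j => ¬ x j = 1), x j = 0 := by
    refine Finset.sum_eq_zero fun j hj => ?_
    rw [Finset.mem_filter] at hj
    rcases zmod2_cases (x j) with h | h
    · exact h
    · exact absurd h hj.2
  have h1 : ∑ j ∈ (G.neighborFinset i).filter (fun j => x j = 1), x j
      = (((G.neighborFinset i).filter (fun j => x j = 1)).card : ZMod 2) := by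
    rw [Finset.sum_congr rfl (fun j hj => (Finset.mem_filter.mp hj).2), Finset.sum_const,
      nsmul_eq_mul, mul_one]
  rw [h1, h2, add_zero]

end Graph



lemma zmod2_sum (f : ZMod 2 → ℂ) : ∑ t, f t = f 0 + f 1 := by
  rw [show (Finset.univ : Finset (ZMod 2)) = {0, 1} from rfl]
  simp

def d1 : ℂ := (Real.sqrt 2 : ℂ)⁻¹ * (1 + Complex.I)
def d2 : ℂ := (Real.sqrt 2 : ℂ)⁻¹ * (1 - Complex.I)

lemma sqrt2_sq : (Real.sqrt 2 : ℂ) * (Real.sqrt 2 : ℂ) = 2 := by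
  rw [← Complex.ofReal_mul, Real.mul_self_sqrt (by norm_num)]
  norm_num

lemma sqrt2_ne : (Real.sqrt 2 : ℂ) ≠ 0 := by
  intro h
  have := sqrt2_sq
  rw [h, mul_zero] at this
  norm_num at this

lemma d1_mul_d2 : d1 * d2 = 1 := by
  have h : ((Real.sqrt 2 : ℂ))⁻¹ * (Real.sqrt 2 : ℂ)⁻¹ = 2⁻¹ := by
    rw [← mul_inv, sqrt2_sq]
  calc d1 * d2 = ((Real.sqrt 2 : ℂ)⁻¹ * (Real.sqrt 2 : ℂ)⁻¹)
        * ((1 + Complex.I) * (1 - Complex.I)) := by rw [d1, d2]; ring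
    _ = 2⁻¹ * 2 := by rw [h]; congr 1; linear_combination -Complex.I_sq
    _ = 1 := by norm_num

lemma d2_eq : d2 = d1 * (-Complex.I) := by
  rw [d1, d2]
  ring_nf
  rw [Complex.I_sq]
  ring

lemma Bfun_zero : Bfun 0 = d1 := by simp [Bfun, d1, sgn]
lemma Bfun_one : Bfun 1 = d2 := by
  simp only [Bfun, d2, sgn, if_neg (by decide : (1 : ZMod 2) ≠ 0)]
  ring

lemma I3 : Complex.I ^ 3 = -Complex.I := by
  rw [(by norm_num : (3:ℕ) = 2+1), pow_add, Complex.I_sq]; ring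
lemma I4 : Complex.I ^ 4 = 1 := by
  rw [(by norm_num : (4:ℕ) = 2+2), pow_add, Complex.I_sq]; ring

lemma neg_I_pow_four : (-Complex.I)^4 = 1 := by
  norm_num [show (4:ℕ) = 2*2 from rfl, pow_mul, neg_pow, Complex.I_sq]

lemma c2_zero : c2 0 = 0 := rfl
lemma c2_one : c2 1 = 0 := by decide
lemma c2_two : c2 2 = 1 := by decide
lemma c2_three : c2 3 = 1 := by decide

/-- The key scalar identity. -/
lemma key : ∀ m : ℕ, ∀ a : ZMod 2,
    (-Complex.I) ^ m * (Amat a 0 + Amat a 1 * sgn ((m : ℕ) : ZMod 2))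
      = d2 * sgn (a * ((m : ℕ) : ZMod 2)) * sgn (c2 m) := by
  intro m
  induction m using Nat.strong_induction_on with
  | _ m ih =>
    intro a
    rcases lt_or_ge m 4 with hm | hm
    · have e2 : ((2:ℕ) : ZMod 2) = 0 := by decide
      have e3 : ((3:ℕ) : ZMod 2) = 1 := by decide
      have e1 : ((1:ℕ) : ZMod 2) = 1 := by decide
      have e0 : ((0:ℕ) : ZMod 2) = 0 := by decide
      have hone : (1 : ZMod 2) ≠ 0 := by decide
      interval_cases m <;> rcases zmod2_cases a with rfl | rfl <;>
        (simp only [e0, e1, e2, e3, c2_zero, c2_one, c2_two, c2_three, Amat_apply, d2]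
         simp +decide only [sgn, mul_zero, zero_mul, mul_one, one_mul, if_true, if_false]
         try ring_nf
         try simp only [Complex.I_sq, I3, I4]
         try ring_nf)
    · obtain ⟨k, rfl⟩ : ∃ k, m = k + 4 := ⟨m - 4, by omega⟩
      rw [pow_add, neg_I_pow_four, mul_one, natCast_add_four, c2_add_four]
      exact ih k (by omega) a

section Graph2

variable {V : Type*} [Fintype V] [DecidableEq V] (G : SimpleGraph V) [DecidableRel G.Adj]
  (i : V)

lemma Dfun_eq (x : V → ZMod 2) :
    (∏ j, if G.Adj i j then Bfun (x j) else 1)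
      = d1 ^ (G.neighborFinset i).card
        * (-Complex.I) ^ ((G.neighborFinset i).filter (fun j => x j = 1)).card := by
  rw [← Finset.prod_filter, ← SimpleGraph.neighborFinset_eq_filter]
  set N := G.neighborFinset i
  rw [← Finset.prod_filter_mul_prod_filter_not N (fun j => x j = 1)]
  have h1 : ∏ j ∈ N.filter (fun j => x j = 1), Bfun (x j)
      = d2 ^ (N.filter (fun j => x j = 1)).card := by
    rw [Finset.prod_congr rfl (fun j hj => by
      rw [(Finset.mem_filter.mp hj).2, Bfun_one]), Finset.prod_const]
  have h2 : ∏ j ∈ N.filter (fun j => ¬ x j = 1), Bfun (x j)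
      = d1 ^ (N.filter (fun j => ¬ x j = 1)).card := by
    rw [Finset.prod_congr rfl (fun j hj => by
      rcases zmod2_cases (x j) with h | h
      · rw [h, Bfun_zero]
      · exact absurd h (Finset.mem_filter.mp hj).2), Finset.prod_const]
  rw [h1, h2, d2_eq, mul_pow]
  have hcard : (N.filter (fun j => x j = 1)).card + (N.filter (fun j => ¬ x j = 1)).card
      = N.card := Finset.card_filter_add_card_filter_not _
  rw [← hcard, pow_add]
  ring

lemma Dfun_update (x : V → ZMod 2) (t : ZMod 2) :
    (∏ j, if G.Adj i j then Bfun (Function.update x i t j) else 1)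
      = ∏ j, if G.Adj i j then Bfun (x j) else 1 := by
  refine Finset.prod_congr rfl fun j _ => ?_
  by_cases hj : j = i
  · subst hj; simp [G.irrefl]
  · rw [Function.update_of_ne hj]

lemma filter_update (x : V → ZMod 2) (t : ZMod 2) :
    ((G.neighborFinset i).filter (fun j => Function.update x i t j = 1))
      = (G.neighborFinset i).filter (fun j => x j = 1) := by
  refine Finset.filter_congr fun j hj => ?_
  rw [SimpleGraph.mem_neighborFinset] at hj
  rw [Function.update_of_ne (G.ne_of_adj hj).symm]

lemma mulVec_graphState (x : V → ZMod 2) :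
    (localCompU G i).mulVec (graphState G) x
      = (d1 ^ (G.neighborFinset i).card * d2) * graphState (localComp G i) x := by
  set N := G.neighborFinset i with hN
  set m := (N.filter (fun j => x j = 1)).card with hm
  set c0 : ℂ := (Real.sqrt 2 : ℂ)⁻¹ ^ (Fintype.card V) with hc0
  have hψ : ∀ t : ZMod 2, graphState G (Function.update x i t)
      = c0 * (sgn (t * Sfun G i x) * sgn (Rfun G i x)) := by
    intro t
    rw [graphState, edgePhase_update, sgn_add]
  rw [localCompU_eq, ← Matrix.mulVec_mulVec, localOp_mulVec]
  have hstep : ∀ t : ZMod 2,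
      Amat (x i) t * (Matrix.diagonal (fun y => ∏ j, if G.Adj i j then Bfun (y j) else 1)).mulVec
        (graphState G) (Function.update x i t)
      = (d1 ^ N.card * (-Complex.I) ^ m)
        * (Amat (x i) t * (c0 * (sgn (t * Sfun G i x) * sgn (Rfun G i x)))) := by
    intro t
    rw [diagonal_mulVec, Dfun_update, Dfun_eq, hψ t, ← hN, ← hm]
    ring
  rw [zmod2_sum, hstep 0, hstep 1, ← mul_add]
  have hsum : Amat (x i) 0 * (c0 * (sgn (0 * Sfun G i x) * sgn (Rfun G i x)))
      + Amat (x i) 1 * (c0 * (sgn (1 * Sfun G i x) * sgn (Rfun G i x)))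
      = c0 * sgn (Rfun G i x) * (Amat (x i) 0 + Amat (x i) 1 * sgn (Sfun G i x)) := by
    have h0 : sgn 0 = (1:ℂ) := by simp [sgn]
    rw [zero_mul, one_mul, h0]
    ring
  rw [hsum]
  have hgs : graphState (localComp G i) x
      = c0 * (sgn (x i * Sfun G i x) * (sgn (Rfun G i x) * sgn (pairPhase G i x))) := by
    rw [graphState, edgePhase_localComp, edgePhase_split G i, sgn_add, sgn_add, ← hc0]
    ring
  rw [hgs, Sfun_eq, pairPhase_eq, ← hN, ← hm]
  have hk := key m (x i)
  calc d1 ^ N.card * (-Complex.I) ^ m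
        * (c0 * sgn (Rfun G i x) * (Amat (x i) 0 + Amat (x i) 1 * sgn ((m : ℕ) : ZMod 2)))
      = d1 ^ N.card * (c0 * sgn (Rfun G i x))
        * ((-Complex.I) ^ m * (Amat (x i) 0 + Amat (x i) 1 * sgn ((m : ℕ) : ZMod 2))) := by
        ring
    _ = d1 ^ N.card * (c0 * sgn (Rfun G i x))
        * (d2 * sgn (x i * ((m : ℕ) : ZMod 2)) * sgn (c2 m)) := by rw [hk]
    _ = d1 ^ N.card * d2
        * (c0 * (sgn (x i * ((m : ℕ) : ZMod 2)) * (sgn (Rfun G i x) * sgn (c2 m)))) := by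
        ring

end Graph2


/-- Local complementation by local unitaries:
`U |G⟩⟨G| U† = |τ_i(G)⟩⟨τ_i(G)|`, i.e. `U|G⟩` equals the graph state `|τ_i(G)⟩`
up to a global phase. -/
theorem local_complementation_by_local_unitaries {n : ℕ} (G : SimpleGraph (Fin n))
    [DecidableRel G.Adj] (i : Fin n) :
    localCompU G i * outer (graphState G) * (localCompU G i)ᴴ
      = outer (graphState (localComp G i)) := by
  have hsd1 : star d1 = d2 := by
    simp [d1, d2, Complex.star_def, _root_.map_mul, map_inv₀, Complex.conj_ofReal,
      _root_.map_add, Complex.conj_I]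
    try ring
  have hsd2 : star d2 = d1 := by
    simp [d1, d2, Complex.star_def, _root_.map_mul, map_inv₀, Complex.conj_ofReal,
      map_sub, Complex.conj_I]
    try ring
  have hφ : star (d1 ^ (G.neighborFinset i).card * d2)
      * (d1 ^ (G.neighborFinset i).card * d2) = 1 := by
    rw [star_mul', star_pow, hsd1, hsd2]
    calc d2 ^ (G.neighborFinset i).card * d1 * (d1 ^ (G.neighborFinset i).card * d2)
        = (d1 * d2) ^ (G.neighborFinset i).card * (d1 * d2) := by ring
      _ = 1 := by rw [d1_mul_d2, one_pow, one_mul]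
  have hv : (localCompU G i).mulVec (graphState G)
      = (d1 ^ (G.neighborFinset i).card * d2) • graphState (localComp G i) :=
    funext (mulVec_graphState G i)
  rw [mul_outer_conjTranspose, hv, outer_smul_unit _ hφ]
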